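/- Let σ, σ' : ℤ × ℤ → Bool be spin configurations. If for every pair of nearest neighbors x, y ∈ ℤ × ℤ one has σ x = σ y if and only if σ' x = σ' y, then either σ' = σ, or σ' x = ¬(σ x) for every x ∈ ℤ × ℤ. -/

import Mathlib

/-- `x` and `y` are nearest neighbors in `ℤ × ℤ`. -/
def nbr (x y : ℤ × ℤ) : Prop := (x.1 - y.1).natAbs + (x.2 - y.2).natAbs = 1

/-- If two spin configurations have exactly the same set of unsatisfied (disagreement)
edges, then they are equal or related by a global spin flip. -/
theorem stmt1 (σ σ' : ℤ × ℤ → Bool)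
    (h : ∀ x y : ℤ × ℤ, nbr x y → (σ x = σ y ↔ σ' x = σ' y)) :
    σ' = σ ∨ ∀ x : ℤ × ℤ, σ' x = !(σ x) := by
  set g : ℤ × ℤ → Bool := fun x => σ x == σ' x with hg
  have key : ∀ x y : ℤ × ℤ, nbr x y → g x = g y := by
    intro x y hn
    have := h x y hn
    simp only [hg]
    revert this
    cases σ x <;> cases σ y <;> cases σ' x <;> cases σ' y <;> simp_all
  have hrow : ∀ a b : ℤ, g (a, b) = g (a, 0) := by
    intro a b
    induction b using Int.induction_on with
    | zero => rfl
    | succ k ih =>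
      rw [← ih]
      exact key _ _ (by simp [nbr]; try omega)
    | pred k ih =>
      rw [← ih]
      exact key _ _ (by simp [nbr]; try omega)
  have hconst : ∀ x : ℤ × ℤ, g x = g (0, 0) := by
    rintro ⟨a, b⟩
    rw [hrow a b]
    induction a using Int.induction_on with
    | zero => rfl
    | succ k ih =>
      rw [← ih]
      exact key _ _ (by simp [nbr]; try omega)
    | pred k ih =>
      rw [← ih]
      exact key _ _ (by simp [nbr]; try omega)
  rcases hb : g (0, 0) with _ | _
  · right
    intro x
    have := hconst x
    rw [hb] at this
    simp only [hg] at this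
    clear hb hconst key hg h
    cases hσ : σ x <;> cases hσ' : σ' x <;> simp_all
  · left
    funext x
    have := hconst x
    rw [hb] at this
    simp only [hg, beq_iff_eq] at this
    exact this.symm
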